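/- Fix reals 0 < R₁ < R₂ < R, α > 0, P_T > 0, 𝒩 > 0, γ > 0 and reflection coefficients 0 < ξ₂ ≤ ξ₁ ≤ 1; set κ = ξ₂/ξ₁. Let r₁ on [R₁, R₂] with density 2r/(R₂² − R₁²) and r₂ on [R₂, R] with density 2r/(R² − R₂²) be independent random variables, and let p₂ = P( P_T·ξ₁·r₁^{−2α}/(P_T·ξ₂·r₂^{−2α} + 𝒩) ≥ γ and P_T·ξ₂·r₂^{−2α}/𝒩 ≥ γ ). If γ < P_T·ξ₂·R₂^{−2α}/𝒩 and R₁^{−2α} ≤ 𝒩·γ/(ξ₁·P_T) + γ·κ·max{R^{−2α}, 𝒩·γ/(ξ₂·P_T)}, then p₂ = 0. -/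

import Mathlib

open MeasureTheory Set

/-- Two-node pairing, fading-free, with `κ = ξ₂/ξ₁`. `p₂` is the
probability (double integral of the joint density of `r₁`, `r₂` over the success
event) that both paired nodes are decoded. If `γ < P_T·ξ₂·R₂^{−2α}/𝒩` and
`R₁^{−2α} ≤ 𝒩γ/(ξ₁P_T) + γκ·max{R^{−2α}, 𝒩γ/(ξ₂P_T)}`, then `p₂ = 0`. -/
theorem backcom_p2_zero_middle_case
    (R₁ R₂ R α PT Noise γ ξ₁ ξ₂ κ : ℝ)
    (h0 : 0 < R₁) (h12 : R₁ < R₂) (h2R : R₂ < R)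
    (hα : 0 < α) (hPT : 0 < PT) (hNoise : 0 < Noise) (hγ : 0 < γ)
    (hξ2 : 0 < ξ₂) (hξ21 : ξ₂ ≤ ξ₁) (hξ1 : ξ₁ ≤ 1)
    (hκ : κ = ξ₂ / ξ₁)
    (hcond1 : γ < PT * ξ₂ * R₂ ^ (-(2 * α)) / Noise)
    (hcond2 : R₁ ^ (-(2 * α)) ≤
      Noise * γ / (ξ₁ * PT) + γ * κ * max (R ^ (-(2 * α))) (Noise * γ / (ξ₂ * PT))) :
    (∫ r₁ in R₁..R₂, ∫ r₂ in R₂..R,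
        if γ ≤ PT * ξ₁ * r₁ ^ (-(2 * α)) / (PT * ξ₂ * r₂ ^ (-(2 * α)) + Noise) ∧
            γ ≤ PT * ξ₂ * r₂ ^ (-(2 * α)) / Noise
          then 2 * r₁ / (R₂ ^ 2 - R₁ ^ 2) * (2 * r₂ / (R ^ 2 - R₂ ^ 2)) else 0) = 0 := by
  have hξ1pos : 0 < ξ₁ := lt_of_lt_of_le hξ2 hξ21
  have hexp : -(2 * α) < 0 := by linarith
  -- The success event is empty for r₁ ∈ Ioc R₁ R₂, r₂ ∈ Icc R₂ R.
  have key : ∀ r₁ ∈ Ioc R₁ R₂, ∀ r₂ ∈ Icc R₂ R,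
      ¬(γ ≤ PT * ξ₁ * r₁ ^ (-(2 * α)) / (PT * ξ₂ * r₂ ^ (-(2 * α)) + Noise) ∧
          γ ≤ PT * ξ₂ * r₂ ^ (-(2 * α)) / Noise) := by
    rintro r₁ ⟨hr₁l, hr₁r⟩ r₂ ⟨hr₂l, hr₂r⟩ ⟨h1, h2⟩
    have hr₁pos : 0 < r₁ := h0.trans hr₁l
    have hr₂pos : 0 < r₂ := by linarith
    set A := r₂ ^ (-(2 * α)) with hA
    set B := r₁ ^ (-(2 * α)) with hB
    have hApos : 0 < A := Real.rpow_pos_of_pos hr₂pos _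
    have hBpos : 0 < B := Real.rpow_pos_of_pos hr₁pos _
    -- from h2 : Noise * γ / (ξ₂ * PT) ≤ A
    have h2' : Noise * γ / (ξ₂ * PT) ≤ A := by
      rw [div_le_iff₀ (by positivity)]
      have := (le_div_iff₀ hNoise).mp h2
      nlinarith
    -- r₂ ≤ R gives R ^ (-(2α)) ≤ A
    have hRA : R ^ (-(2 * α)) ≤ A :=
      Real.rpow_le_rpow_of_nonpos hr₂pos hr₂r hexp.le
    have hmax : max (R ^ (-(2 * α))) (Noise * γ / (ξ₂ * PT)) ≤ A := max_le hRA h2'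
    -- from h1 : Noise*γ/(ξ₁*PT) + γ*κ*A ≤ B
    have hden : 0 < PT * ξ₂ * A + Noise := by positivity
    have h1' : γ * (PT * ξ₂ * A + Noise) ≤ PT * ξ₁ * B := by
      have := (le_div_iff₀ hden).mp h1
      linarith
    have hstep : Noise * γ / (ξ₁ * PT) + γ * κ * A ≤ B := by
      rw [hκ]
      rw [div_add' _ _ _ (by positivity : (ξ₁ * PT) ≠ 0), div_le_iff₀ (by positivity)]
      have : γ * (ξ₂ / ξ₁) * A * (ξ₁ * PT) = γ * (PT * ξ₂ * A) := by
        field_simp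
      nlinarith
    have hκpos : 0 < κ := by rw [hκ]; positivity
    have hchain : R₁ ^ (-(2 * α)) ≤ B := by
      refine hcond2.trans (le_trans ?_ hstep)
      have := mul_le_mul_of_nonneg_left hmax (by positivity : (0:ℝ) ≤ γ * κ)
      linarith
    have hlt : B < R₁ ^ (-(2 * α)) :=
      Real.rpow_lt_rpow_of_neg h0 hr₁l hexp
    linarith
  rw [intervalIntegral.integral_of_le h12.le]
  have heq : EqOn (fun r₁ => ∫ r₂ in R₂..R,
      if γ ≤ PT * ξ₁ * r₁ ^ (-(2 * α)) / (PT * ξ₂ * r₂ ^ (-(2 * α)) + Noise) ∧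
          γ ≤ PT * ξ₂ * r₂ ^ (-(2 * α)) / Noise
      then 2 * r₁ / (R₂ ^ 2 - R₁ ^ 2) * (2 * r₂ / (R ^ 2 - R₂ ^ 2)) else 0)
      (fun _ => (0:ℝ)) (Ioc R₁ R₂) := by
    intro r₁ hr₁
    simp only
    have inner : ∀ r₂ ∈ uIcc R₂ R,
        (if γ ≤ PT * ξ₁ * r₁ ^ (-(2 * α)) / (PT * ξ₂ * r₂ ^ (-(2 * α)) + Noise) ∧
              γ ≤ PT * ξ₂ * r₂ ^ (-(2 * α)) / Noise
          then 2 * r₁ / (R₂ ^ 2 - R₁ ^ 2) * (2 * r₂ / (R ^ 2 - R₂ ^ 2)) else 0) = 0 := by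
      intro r₂ hr₂
      rw [uIcc_of_le h2R.le] at hr₂
      rw [if_neg (key r₁ hr₁ r₂ hr₂)]
    rw [intervalIntegral.integral_congr inner]
    simp
  rw [setIntegral_congr_fun measurableSet_Ioc heq, integral_zero]
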